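/- Under the gaps-and-weight setup, assume that G_j is nonempty for every j = 1, …, n. Then the n × n real matrix M with entries M_{j,l} = I_j(t ↦ t^{l−1}) (j, l = 1, …, n) is invertible. Equivalently, the matrix of integrals of the basis of holomorphic differentials λ^{l−1} dλ / w over the collections of paths G_j is non-degenerate. -/

import Mathlib

open Finset

/-- The weight `w(t) = √(−∏_{i=0}^{2n}(t − bᵢ))` on the gaps of the hyperelliptic curve. -/
noncomputable def gapWeight (n : ℕ) (b : Fin (2 * n + 1) → ℝ) (t : ℝ) : ℝ :=
  Real.sqrt (-∏ i, (t - b i))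

/-- The signed integral `I_j(f) = ε_j · Σ_{(c,d) ∈ G_j} ∫_c^d f(t)/w(t) dt` over the pieces
of the collection of paths `G_j` lying in gap `j`. -/
noncomputable def gapIntegral (n : ℕ) (b : Fin (2 * n + 1) → ℝ) (ε : Fin n → ℝ)
    (G : Fin n → List (ℝ × ℝ)) (j : Fin n) (f : ℝ → ℝ) : ℝ :=
  ε j * ((G j).map fun pr => ∫ t in pr.1..pr.2, f t / gapWeight n b t).sum

/-- Factorized lower bound for `-∏ (t - bᵢ)` on the closed gap. -/
lemma gap_prod_lower (n : ℕ) (b : Fin (2 * n + 1) → ℝ) (hb : StrictMono b)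
    (j : Fin n) :
    ∃ K : ℝ, 0 < K ∧ ∀ t ∈ Set.Icc (b ⟨2 * (j : ℕ) + 1, by have := j.isLt; omega⟩)
      (b ⟨2 * (j : ℕ) + 2, by have := j.isLt; omega⟩),
      K * ((t - b ⟨2 * (j : ℕ) + 1, by have := j.isLt; omega⟩) *
        (b ⟨2 * (j : ℕ) + 2, by have := j.isLt; omega⟩ - t)) ≤ -∏ i, (t - b i) := by
  have hj := j.isLt
  set i₁ : Fin (2 * n + 1) := ⟨2 * (j : ℕ) + 1, by have := j.isLt; omega⟩ with hi₁
  set i₂ : Fin (2 * n + 1) := ⟨2 * (j : ℕ) + 2, by have := j.isLt; omega⟩ with hi₂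
  have hv₁ : (i₁ : ℕ) = 2 * (j : ℕ) + 1 := rfl
  have hv₂ : (i₂ : ℕ) = 2 * (j : ℕ) + 2 := rfl
  refine ⟨(∏ i ∈ Iio i₁, (b i₁ - b i)) * (∏ i ∈ Ioi i₂, (b i - b i₂)), ?_, ?_⟩
  · apply mul_pos <;> exact Finset.prod_pos (fun i hi => sub_pos.mpr (hb (by
      simp only [Finset.mem_Iio, Finset.mem_Ioi] at hi; exact hi)))
  intro t ht
  obtain ⟨ht1, ht2⟩ := ht
  -- factor the product
  have h12 : i₂ ∈ univ.erase i₁ := by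
    simp [Fin.ext_iff, hv₁, hv₂]
  have hfac : ∏ i, (t - b i) =
      (t - b i₁) * ((t - b i₂) * ∏ i ∈ (univ.erase i₁).erase i₂, (t - b i)) := by
    rw [← Finset.mul_prod_erase univ _ (mem_univ i₁),
      ← Finset.mul_prod_erase (univ.erase i₁) _ h12]
  have hset : (univ.erase i₁).erase i₂ = Iio i₁ ∪ Ioi i₂ := by
    ext i
    simp only [Finset.mem_erase, Finset.mem_univ, and_true, Finset.mem_union,
      Finset.mem_Iio, Finset.mem_Ioi, Fin.ext_iff, Fin.lt_def, hv₁, hv₂]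
    omega
  have hdisj : Disjoint (Iio i₁) (Ioi i₂) := by
    rw [Finset.disjoint_left]
    intro i hi hi'
    simp only [Finset.mem_Iio, Finset.mem_Ioi, Fin.lt_def, hi₁, hi₂] at hi hi'
    omega
  have hIoi : ∏ i ∈ Ioi i₂, (t - b i) = ∏ i ∈ Ioi i₂, (b i - t) := by
    have hcard : #(Ioi i₂) = 2 * n + 1 - 1 - (2 * (j : ℕ) + 2) := by
      rw [Fin.card_Ioi]
    have heven : Even #(Ioi i₂) := by rw [hcard]; exact ⟨n - (j : ℕ) - 1, by have := j.isLt; omega⟩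
    calc ∏ i ∈ Ioi i₂, (t - b i) = ∏ i ∈ Ioi i₂, (-1) * (b i - t) := by
          apply Finset.prod_congr rfl; intro i _; ring
      _ = (-1) ^ #(Ioi i₂) * ∏ i ∈ Ioi i₂, (b i - t) := by
          rw [Finset.prod_mul_distrib, Finset.prod_const]
      _ = ∏ i ∈ Ioi i₂, (b i - t) := by rw [heven.neg_one_pow, one_mul]
  have key : -∏ i, (t - b i) = (t - b i₁) * (b i₂ - t) *
      ((∏ i ∈ Iio i₁, (t - b i)) * ∏ i ∈ Ioi i₂, (b i - t)) := by
    rw [hfac, hset, Finset.prod_union hdisj, hIoi]; ring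
  rw [key, mul_comm ((∏ i ∈ Iio i₁, (b i₁ - b i)) * ∏ i ∈ Ioi i₂, (b i - b i₂)) _]
  apply mul_le_mul_of_nonneg_left
  · apply mul_le_mul
    · exact Finset.prod_le_prod (fun i hi => sub_nonneg.mpr (hb (by
        simp only [Finset.mem_Iio] at hi; exact hi)).le)
        (fun i hi => by have := ht1; linarith)
    · exact Finset.prod_le_prod (fun i hi => sub_nonneg.mpr (hb (by
        simp only [Finset.mem_Ioi] at hi; exact hi)).le)
        (fun i hi => by have := ht2; linarith)
    · exact Finset.prod_nonneg (fun i hi => sub_nonneg.mpr (hb (by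
        simp only [Finset.mem_Ioi] at hi; exact hi)).le)
    · exact Finset.prod_nonneg (fun i hi => by
        have h := hb (show i < i₁ from by simpa using hi); have := ht1; linarith)
  · have h := hb (show i₁ < i₂ from by simp [Fin.lt_def, hv₁, hv₂])
    nlinarith

lemma gapWeight_continuous (n : ℕ) (b : Fin (2 * n + 1) → ℝ) :
    Continuous (gapWeight n b) := by
  apply Real.continuous_sqrt.comp
  exact (continuous_finset_prod _ fun i _ => continuous_id.sub continuous_const).neg

lemma gapWeight_pos (n : ℕ) (b : Fin (2 * n + 1) → ℝ) (hb : StrictMono b)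
    (j : Fin n) {t : ℝ}
    (ht : t ∈ Set.Ioo (b ⟨2 * (j : ℕ) + 1, by have := j.isLt; omega⟩) (b ⟨2 * (j : ℕ) + 2, by have := j.isLt; omega⟩)) :
    0 < gapWeight n b t := by
  obtain ⟨K, hK, hlow⟩ := gap_prod_lower n b hb j
  apply Real.sqrt_pos.mpr
  have := hlow t ⟨ht.1.le, ht.2.le⟩
  have h1 : 0 < t - b ⟨2 * (j : ℕ) + 1, by have := j.isLt; omega⟩ := by linarith [ht.1]
  have h2 : 0 < b ⟨2 * (j : ℕ) + 2, by have := j.isLt; omega⟩ - t := by linarith [ht.2]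
  nlinarith [mul_pos hK (mul_pos h1 h2)]

lemma gap_integrable (n : ℕ) (b : Fin (2 * n + 1) → ℝ) (hb : StrictMono b)
    (j : Fin n) {f : ℝ → ℝ} (hf : Continuous f) {c d : ℝ}
    (hc : b ⟨2 * (j : ℕ) + 1, by have := j.isLt; omega⟩ ≤ c) (hcd : c ≤ d)
    (hd : d ≤ b ⟨2 * (j : ℕ) + 2, by have := j.isLt; omega⟩) :
    IntervalIntegrable (fun t => f t / gapWeight n b t) MeasureTheory.volume c d := by
  set A := b ⟨2 * (j : ℕ) + 1, by have := j.isLt; omega⟩ with hA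
  set D := b ⟨2 * (j : ℕ) + 2, by have := j.isLt; omega⟩ with hD
  have hAD : A < D := hb (by simp [Fin.lt_def])
  obtain ⟨K, hK, hlow⟩ := gap_prod_lower n b hb j
  obtain ⟨Mf, hMf⟩ := isCompact_Icc.exists_bound_of_continuousOn (s := Set.Icc A D)
    hf.continuousOn
  have hMf0 : 0 ≤ Mf := le_trans (norm_nonneg _) (hMf A ⟨le_refl A, hAD.le⟩)
  set L := D - A with hL
  have hL0 : 0 < L / 2 := by rw [hL]; linarith
  have hK0 : (0:ℝ) < Real.sqrt K := Real.sqrt_pos.mpr hK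
  have hL0' : (0:ℝ) < Real.sqrt (L / 2) := Real.sqrt_pos.mpr hL0
  set C := Mf / (Real.sqrt K * Real.sqrt (L / 2)) with hC
  have hC0 : 0 ≤ C := div_nonneg hMf0 (by positivity)
  set g : ℝ → ℝ := fun t => C * ((t - A) ^ (-(1/2) : ℝ) + (D - t) ^ (-(1/2) : ℝ)) with hg
  have hgi : IntervalIntegrable g MeasureTheory.volume c d := by
    apply IntervalIntegrable.const_mul
    apply IntervalIntegrable.add
    · have := (intervalIntegral.intervalIntegrable_rpow' (a := c - A) (b := d - A)
        (r := -(1/2)) (by norm_num)).comp_sub_right A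
      simpa using this
    · have := (intervalIntegral.intervalIntegrable_rpow' (a := D - d) (b := D - c)
        (r := -(1/2)) (by norm_num)).comp_sub_left D
      simpa using this.symm
  apply hgi.mono_fun
  · exact ((hf.measurable.div (gapWeight_continuous n b).measurable).aestronglyMeasurable).restrict
  · rw [Filter.EventuallyLE, MeasureTheory.ae_restrict_iff' measurableSet_uIoc]
    apply Filter.Eventually.of_forall
    intro t ht
    rw [Set.uIoc_of_le hcd] at ht
    have htA : A < t := lt_of_le_of_lt hc ht.1
    have htD : t ≤ D := le_trans ht.2 hd
    have hgnn : 0 ≤ g t := by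
      rw [hg]
      have h1 : (0:ℝ) ≤ (t - A) ^ (-(1/2) : ℝ) := Real.rpow_nonneg (by linarith) _
      have h2 : (0:ℝ) ≤ (D - t) ^ (-(1/2) : ℝ) := Real.rpow_nonneg (by linarith) _
      positivity
    rcases eq_or_lt_of_le htD with hteq | htlt
    · have hprod : (∏ i, (t - b i)) = 0 := by
        apply Finset.prod_eq_zero
          (Finset.mem_univ (⟨2 * (j : ℕ) + 2, by have := j.isLt; omega⟩ : Fin (2 * n + 1)))
        show t - D = 0
        rw [hteq]; ring
      have hw0 : gapWeight n b t = 0 := by simp [gapWeight, hprod]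
      simp only [hw0, div_zero, norm_zero]
      exact le_trans hgnn (le_abs_self _)
    have hx : 0 < t - A := by linarith
    have hy : 0 < D - t := by linarith
    have hx0 : (0:ℝ) < Real.sqrt (t - A) := Real.sqrt_pos.mpr hx
    have hy0 : (0:ℝ) < Real.sqrt (D - t) := Real.sqrt_pos.mpr hy
    have hlow' : K * ((t - A) * (D - t)) ≤ -∏ i, (t - b i) := hlow t ⟨htA.le, htD⟩
    have hwl : Real.sqrt K * (Real.sqrt (t - A) * Real.sqrt (D - t)) ≤ gapWeight n b t := by
      have hsplit : Real.sqrt (K * ((t - A) * (D - t))) =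
          Real.sqrt K * (Real.sqrt (t - A) * Real.sqrt (D - t)) := by
        rw [Real.sqrt_mul hK.le, Real.sqrt_mul hx.le]
      rw [← hsplit, gapWeight]
      exact Real.sqrt_le_sqrt hlow'
    have hwpos : 0 < Real.sqrt K * (Real.sqrt (t - A) * Real.sqrt (D - t)) := by positivity
    have hnorm : ‖f t / gapWeight n b t‖ ≤
        Mf / (Real.sqrt K * (Real.sqrt (t - A) * Real.sqrt (D - t))) := by
      rw [norm_div]
      have hwt : 0 < gapWeight n b t := lt_of_lt_of_le hwpos hwl
      rw [Real.norm_eq_abs (gapWeight n b t), abs_of_pos hwt]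
      exact div_le_div₀ (by positivity) (hMf t ⟨htA.le, htD⟩) hwpos hwl
    have hr1 : ((t - A) ^ (-(1/2) : ℝ)) = (Real.sqrt (t - A))⁻¹ := by
      rw [Real.sqrt_eq_rpow, Real.rpow_neg hx.le]
    have hr2 : ((D - t) ^ (-(1/2) : ℝ)) = (Real.sqrt (D - t))⁻¹ := by
      rw [Real.sqrt_eq_rpow, Real.rpow_neg hy.le]
    have hgt : g t = C * (Real.sqrt (t - A))⁻¹ + C * (Real.sqrt (D - t))⁻¹ := by
      rw [hg]; simp only []; rw [hr1, hr2, mul_add]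
    have hsum : (t - A) + (D - t) = L := by rw [hL]; ring
    refine le_trans hnorm (le_trans ?_ (le_abs_self _))
    rw [hgt]
    rcases le_total (t - A) (D - t) with hxy | hxy
    · have hy2 : Real.sqrt (L / 2) ≤ Real.sqrt (D - t) := Real.sqrt_le_sqrt (by linarith)
      have h1 : Real.sqrt K * (Real.sqrt (L/2) * Real.sqrt (t - A)) ≤
          Real.sqrt K * (Real.sqrt (t - A) * Real.sqrt (D - t)) := by
        rw [show Real.sqrt K * (Real.sqrt (L/2) * Real.sqrt (t - A)) =
            (Real.sqrt K * Real.sqrt (t - A)) * Real.sqrt (L/2) by ring,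
          show Real.sqrt K * (Real.sqrt (t - A) * Real.sqrt (D - t)) =
            (Real.sqrt K * Real.sqrt (t - A)) * Real.sqrt (D - t) by ring]
        exact mul_le_mul_of_nonneg_left hy2 (by positivity)
      have h2 : Mf / (Real.sqrt K * (Real.sqrt (t - A) * Real.sqrt (D - t))) ≤
          Mf / (Real.sqrt K * (Real.sqrt (L/2) * Real.sqrt (t - A))) :=
        div_le_div_of_nonneg_left hMf0 (by positivity) h1
      have heq : Mf / (Real.sqrt K * (Real.sqrt (L/2) * Real.sqrt (t - A))) =
          C * (Real.sqrt (t - A))⁻¹ := by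
        rw [← mul_assoc, div_mul_eq_div_div, ← hC, div_eq_mul_inv]
      refine le_trans h2 (le_of_eq heq |>.trans ?_)
      have : 0 ≤ C * (Real.sqrt (D - t))⁻¹ := by positivity
      linarith
    · have hy2 : Real.sqrt (L / 2) ≤ Real.sqrt (t - A) := Real.sqrt_le_sqrt (by linarith)
      have h1 : Real.sqrt K * (Real.sqrt (L/2) * Real.sqrt (D - t)) ≤
          Real.sqrt K * (Real.sqrt (t - A) * Real.sqrt (D - t)) := by
        rw [show Real.sqrt K * (Real.sqrt (L/2) * Real.sqrt (D - t)) =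
            (Real.sqrt K * Real.sqrt (D - t)) * Real.sqrt (L/2) by ring,
          show Real.sqrt K * (Real.sqrt (t - A) * Real.sqrt (D - t)) =
            (Real.sqrt K * Real.sqrt (D - t)) * Real.sqrt (t - A) by ring]
        exact mul_le_mul_of_nonneg_left hy2 (by positivity)
      have h2 : Mf / (Real.sqrt K * (Real.sqrt (t - A) * Real.sqrt (D - t))) ≤
          Mf / (Real.sqrt K * (Real.sqrt (L/2) * Real.sqrt (D - t))) :=
        div_le_div_of_nonneg_left hMf0 (by positivity) h1
      have heq : Mf / (Real.sqrt K * (Real.sqrt (L/2) * Real.sqrt (D - t))) =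
          C * (Real.sqrt (D - t))⁻¹ := by
        rw [← mul_assoc, div_mul_eq_div_div, ← hC, div_eq_mul_inv]
      refine le_trans h2 (le_of_eq heq |>.trans ?_)
      have : 0 ≤ C * (Real.sqrt (t - A))⁻¹ := by positivity
      linarith

lemma gap_integral_pos (n : ℕ) (b : Fin (2 * n + 1) → ℝ) (hb : StrictMono b)
    (j : Fin n) {f : ℝ → ℝ} (hf : Continuous f)
    (hpos : ∀ t ∈ Set.Ioo (b ⟨2 * (j : ℕ) + 1, by have := j.isLt; omega⟩)
      (b ⟨2 * (j : ℕ) + 2, by have := j.isLt; omega⟩), 0 < f t)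
    {c d : ℝ} (hc : b ⟨2 * (j : ℕ) + 1, by have := j.isLt; omega⟩ ≤ c) (hcd : c < d)
    (hd : d ≤ b ⟨2 * (j : ℕ) + 2, by have := j.isLt; omega⟩) :
    0 < ∫ t in c..d, f t / gapWeight n b t := by
  apply intervalIntegral.intervalIntegral_pos_of_pos_on
    (gap_integrable n b hb j hf hc hcd.le hd)
  · intro t ht
    have htm : t ∈ Set.Ioo (b ⟨2 * (j : ℕ) + 1, by have := j.isLt; omega⟩)
        (b ⟨2 * (j : ℕ) + 2, by have := j.isLt; omega⟩) :=
      ⟨lt_of_le_of_lt hc ht.1, lt_of_lt_of_le ht.2 hd⟩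
    exact div_pos (hpos t htm) (gapWeight_pos n b hb j htm)
  · exact hcd

lemma list_sum_swap {α β : Type*} (L : List α) (s : Finset β) (u : β → α → ℝ) :
    ∑ l ∈ s, (L.map (u l)).sum = (L.map fun a => ∑ l ∈ s, u l a).sum := by
  induction L with
  | nil => simp
  | cons a L ih => simp [Finset.sum_add_distrib, ih]

lemma list_sum_map_neg {α : Type*} (L : List α) (F : α → ℝ) :
    (L.map fun a => -(F a)).sum = -(L.map F).sum := by
  induction L with
  | nil => simp
  | cons a L ih => simp [ih]; ring


/-- Real-integral form of the paper's Corollary: if every `G_j` is nonempty, the matrix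
`M_{j,l} = I_j(t^{l−1})` of integrals of the basis of holomorphic differentials
`λ^{l−1} dλ/w` over the collections of paths `G_j` is non-degenerate. -/
theorem nondegenerate_period_matrix (n : ℕ) (hn : 1 ≤ n)
    (b : Fin (2 * n + 1) → ℝ) (hb0 : b 0 = 0) (hb : StrictMono b)
    (ε : Fin n → ℝ) (hε : ∀ j, ε j = 1 ∨ ε j = -1)
    (G : Fin n → List (ℝ × ℝ))
    (hG : ∀ j : Fin n, ∀ pr ∈ G j,
      b ⟨2 * (j : ℕ) + 1, by omega⟩ ≤ pr.1 ∧ pr.1 < pr.2 ∧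
        pr.2 ≤ b ⟨2 * (j : ℕ) + 2, by omega⟩)
    (hGne : ∀ j : Fin n, G j ≠ []) :
    IsUnit (Matrix.of fun j l : Fin n =>
      gapIntegral n b ε G j (fun t => t ^ (l : ℕ))) := by
  rw [Matrix.isUnit_iff_isUnit_det, isUnit_iff_ne_zero]
  intro hdet
  obtain ⟨c, hc0, hMc⟩ := Matrix.exists_mulVec_eq_zero_iff.mpr hdet
  set p : Polynomial ℝ := ∑ l : Fin n, Polynomial.C (c l) * Polynomial.X ^ (l : ℕ) with hp
  have peval : ∀ t : ℝ, p.eval t = ∑ l : Fin n, c l * t ^ (l : ℕ) := by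
    intro t
    rw [hp, Polynomial.eval_finset_sum]
    simp
  have pcont : Continuous fun t : ℝ => p.eval t := p.continuous
  -- the integral of p over each collection vanishes
  have key : ∀ j : Fin n,
      ((G j).map fun pr => ∫ t in pr.1..pr.2, p.eval t / gapWeight n b t).sum = 0 := by
    intro j
    have hj := congrFun hMc j
    simp only [Matrix.mulVec, dotProduct, Matrix.of_apply, gapIntegral, Pi.zero_apply] at hj
    have hswap : ∑ l : Fin n, ε j * ((G j).map fun pr =>
        ∫ t in pr.1..pr.2, t ^ (l : ℕ) / gapWeight n b t).sum * c l
        = ε j * ((G j).map fun pr => ∫ t in pr.1..pr.2, p.eval t / gapWeight n b t).sum := by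
      have h1 : ∀ l : Fin n, ε j * ((G j).map fun pr =>
          ∫ t in pr.1..pr.2, t ^ (l : ℕ) / gapWeight n b t).sum * c l
          = ε j * ((G j).map fun pr =>
          ∫ t in pr.1..pr.2, c l * t ^ (l : ℕ) / gapWeight n b t).sum := by
        intro l
        rw [mul_assoc, mul_comm _ (c l), ← List.sum_map_mul_left, mul_eq_mul_left_iff]
        left
        refine congrArg List.sum (List.map_congr_left ?_)
        intro pr _
        simp only [mul_div_assoc]
        exact (intervalIntegral.integral_const_mul _ _).symm
      rw [Finset.sum_congr rfl (fun l _ => h1 l), ← Finset.mul_sum,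
        list_sum_swap (G j) univ (fun l pr => ∫ t in pr.1..pr.2, c l * t ^ (l : ℕ) / gapWeight n b t),
        mul_eq_mul_left_iff]
      left
      refine congrArg List.sum (List.map_congr_left ?_)
      intro pr hpr
      obtain ⟨h1, h2, h3⟩ := hG j pr hpr
      rw [← intervalIntegral.integral_finset_sum]
      · congr 1
        ext t
        rw [peval, Finset.sum_div]
      · intro l _
        have : (fun t : ℝ => c l * t ^ (l : ℕ) / gapWeight n b t)
            = fun t : ℝ => (c l * t ^ (l : ℕ)) / gapWeight n b t := by
          ext t; ring
        rw [this]
        exact gap_integrable n b hb j (by continuity) h1 h2.le h3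
    rw [hswap] at hj
    rcases hε j with h | h <;> rw [h] at hj <;> linarith
  -- p has a root in each gap
  have hroot : ∀ j : Fin n, ∃ t, t ∈ Set.Ioo (b ⟨2 * (j : ℕ) + 1, by omega⟩)
      (b ⟨2 * (j : ℕ) + 2, by omega⟩) ∧ p.eval t = 0 := by
    intro j
    by_contra hnr
    push_neg at hnr
    set A := b ⟨2 * (j : ℕ) + 1, by omega⟩ with hA
    set D := b ⟨2 * (j : ℕ) + 2, by omega⟩ with hD
    have hAD : A < D := hb (by simp [Fin.lt_def])
    have ht₀ : (A + D) / 2 ∈ Set.Ioo A D := ⟨by linarith, by linarith⟩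
    -- constant sign on the gap
    have hsign : (∀ t ∈ Set.Ioo A D, 0 < p.eval t) ∨ (∀ t ∈ Set.Ioo A D, p.eval t < 0) := by
      have hne := hnr _ ht₀
      rcases hne.lt_or_gt with hneg | hpos
      · right
        intro t ht
        rcases (hnr t ht).lt_or_gt with h | h
        · exact h
        exfalso
        have hsub : Set.uIcc ((A + D) / 2) t ⊆ Set.Ioo A D :=
          Set.ordConnected_Ioo.uIcc_subset ht₀ ht
        have := intermediate_value_uIcc (pcont.continuousOn (s := Set.uIcc ((A + D) / 2) t))
        have h0 : (0:ℝ) ∈ Set.uIcc (p.eval ((A + D) / 2)) (p.eval t) :=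
          Set.mem_uIcc.mpr (Or.inl ⟨hneg.le, h.le⟩)
        obtain ⟨t₂, ht₂, hev⟩ := this h0
        exact hnr t₂ (hsub ht₂) hev
      · left
        intro t ht
        rcases (hnr t ht).lt_or_gt with h | h
        swap
        · exact h
        exfalso
        have hsub : Set.uIcc ((A + D) / 2) t ⊆ Set.Ioo A D :=
          Set.ordConnected_Ioo.uIcc_subset ht₀ ht
        have := intermediate_value_uIcc (pcont.continuousOn (s := Set.uIcc ((A + D) / 2) t))
        have h0 : (0:ℝ) ∈ Set.uIcc (p.eval ((A + D) / 2)) (p.eval t) :=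
          Set.mem_uIcc.mpr (Or.inr ⟨h.le, hpos.le⟩)
        obtain ⟨t₂, ht₂, hev⟩ := this h0
        exact hnr t₂ (hsub ht₂) hev
    rcases hsign with hpos | hneg
    · have : 0 < ((G j).map fun pr => ∫ t in pr.1..pr.2, p.eval t / gapWeight n b t).sum := by
        apply List.sum_pos
        · intro x hx
          obtain ⟨pr, hpr, rfl⟩ := List.mem_map.mp hx
          obtain ⟨h1, h2, h3⟩ := hG j pr hpr
          exact gap_integral_pos n b hb j pcont hpos h1 h2 h3
        · simp [hGne j]
      rw [key j] at this
      exact lt_irrefl 0 this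
    · have : 0 < ((G j).map fun pr =>
          ∫ t in pr.1..pr.2, (-(p.eval t)) / gapWeight n b t).sum := by
        apply List.sum_pos
        · intro x hx
          obtain ⟨pr, hpr, rfl⟩ := List.mem_map.mp hx
          obtain ⟨h1, h2, h3⟩ := hG j pr hpr
          exact gap_integral_pos n b hb j (pcont.neg) (fun t ht => by show (0:ℝ) < -(p.eval t); linarith [hneg t ht])
            h1 h2 h3
        · simp [hGne j]
      have hneg' : ((G j).map fun pr =>
          ∫ t in pr.1..pr.2, (-(p.eval t)) / gapWeight n b t).sum
          = -((G j).map fun pr => ∫ t in pr.1..pr.2, p.eval t / gapWeight n b t).sum := by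
        rw [← list_sum_map_neg]
        apply congrArg
        apply List.map_congr_left
        intro pr _
        rw [← intervalIntegral.integral_neg]
        congr 1
        ext t
        ring
      rw [hneg', key j] at this
      simp at this
    -- done with contradiction cases
  -- collect the roots
  choose r hr hr0 using hroot
  have rinj : Function.Injective r := by
    have hmono : StrictMono r := by
      intro j j' hjj
      have h1 : r j < b ⟨2 * (j : ℕ) + 2, by omega⟩ := (hr j).2
      have h2 : b ⟨2 * (j' : ℕ) + 1, by omega⟩ < r j' := (hr j').1
      have h3 : b ⟨2 * (j : ℕ) + 2, by omega⟩ ≤ b ⟨2 * (j' : ℕ) + 1, by omega⟩ := by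
        apply hb.monotone
        simp only [Fin.mk_le_mk]
        have : (j : ℕ) < (j' : ℕ) := hjj
        omega
      linarith
    exact hmono.injective
  have hdeg : p.natDegree < Fintype.card (Fin n) := by
    rw [Fintype.card_fin]
    have : p.natDegree ≤ n - 1 := by
      rw [hp]
      apply Polynomial.natDegree_sum_le_of_forall_le
      intro l _
      refine le_trans (Polynomial.natDegree_mul_le) ?_
      simp [Polynomial.natDegree_X_pow]
      omega
    omega
  have hpz : p = 0 :=
    Polynomial.eq_zero_of_natDegree_lt_card_of_eval_eq_zero p rinj hr0 hdeg
  apply hc0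
  funext l
  have hcl : p.coeff (l : ℕ) = c l := by
    rw [hp, Polynomial.finset_sum_coeff]
    simp only [Polynomial.coeff_C_mul, Polynomial.coeff_X_pow]
    rw [Finset.sum_eq_single l]
    · simp
    · intro l' _ hne
      have : ¬ ((l : ℕ) = (l' : ℕ)) := fun h => hne (Fin.ext h.symm)
      simp [this]
    · simp
  rw [hpz] at hcl
  simp at hcl
  simp [Pi.zero_apply, ← hcl]
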